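/- For d ≥ 2 and any fixed i ∈ {1,...,d-1}, Σ_{z ∈ {0,1}^d, z ≠ 0, z_d = 0} [ (d/(d-1))·z_i - (1/(d-1))·|z| ] · π(|z|) = 1/d, where |z| is the number of ones in z, 0 is the all-zero vector, and π(s) = (d-1)/(C(d,s)·s·(d-s)). -/

import Mathlib

open Finset

/-- The Shapley kernel weight `π(s) = (d-1)/(C(d,s)·s·(d-s))`. -/
noncomputable def shapleyKernel (d s : ℕ) : ℝ :=
  ((d : ℝ) - 1) / ((d.choose s : ℝ) * (s : ℝ) * ((d : ℝ) - (s : ℝ)))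

/-- The 0-1 indicator vector of a subset `S ⊆ [d]` (the binary vector `z`). -/
def indicatorVec {d : ℕ} (S : Finset (Fin d)) : Fin d → ℝ :=
  fun i => if i ∈ S then 1 else 0

theorem natB (d s : ℕ) (hd : 1 ≤ d) (hs : s ≤ d - 1) :
    (d - s) * Nat.choose d s = d * Nat.choose (d-1) s := by
  obtain ⟨e, rfl⟩ : ∃ e, d = e + 1 := ⟨d - 1, by omega⟩
  have h := Nat.add_one_mul_choose_eq e (e - s)
  have h2 : Nat.choose e (e - s) = Nat.choose e s := Nat.choose_symm (by omega)
  have h3 : Nat.choose (e+1) (e - s).succ = Nat.choose (e+1) s := by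
    rw [show (e-s).succ = e + 1 - s by omega,
      ← Nat.choose_symm (n := e+1) (k := s) (by omega)]
  rw [h2, h3, show e - s + 1 = e + 1 - s by omega] at h
  simp only [Nat.add_sub_cancel]
  simpa [Nat.succ_eq_add_one, mul_comm] using h.symm

theorem natB' (d s : ℕ) (hd : 1 ≤ d) (h1 : 1 ≤ s) (hs : s ≤ d) :
    s * Nat.choose d s = d * Nat.choose (d-1) (s-1) := by
  obtain ⟨e, rfl⟩ : ∃ e, d = e + 1 := ⟨d - 1, by omega⟩
  obtain ⟨t, rfl⟩ : ∃ t, s = t + 1 := ⟨s - 1, by omega⟩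
  have h := Nat.add_one_mul_choose_eq e t
  simp only [Nat.add_sub_cancel]
  simpa [Nat.succ_eq_add_one, mul_comm] using h.symm

theorem natA (d s : ℕ) (hd : 2 ≤ d) (h1 : 1 ≤ s) (hs : s ≤ d - 1) :
    s * ((d - s) * Nat.choose d s) = d * ((d-1) * Nat.choose (d-2) (s-1)) := by
  have hb' := natB' d s (by omega) h1 (by omega)
  have hb := natB (d-1) (s-1) (by omega) (by omega)
  rw [show d - 1 - (s-1) = d - s by omega, show d - 1 - 1 = d - 2 by omega] at hb
  calc s * ((d-s) * Nat.choose d s) = (d-s) * (s * Nat.choose d s) := by ring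
    _ = (d-s) * (d * Nat.choose (d-1) (s-1)) := by rw [hb']
    _ = d * ((d - s) * Nat.choose (d-1) (s-1)) := by ring
    _ = d * ((d-1) * Nat.choose (d-2) (s-1)) := by rw [hb]

theorem L1 (d s : ℕ) (hd : 2 ≤ d) (hs : s < d - 1) :
    ((d:ℝ) / ((d:ℝ)-1)) * (Nat.choose (d-2) s) * shapleyKernel d (s+1) = 1/((d:ℝ)-1) := by
  have hA := natA d (s+1) hd (by omega) (by omega)
  rw [show s+1-1 = s from rfl] at hA
  have hA' : ((s:ℝ)+1) * (((d:ℝ) - ((s:ℝ)+1)) * (Nat.choose d (s+1) : ℝ))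
      = (d:ℝ) * (((d:ℝ)-1) * (Nat.choose (d-2) s : ℝ)) := by
    have h := congrArg (Nat.cast : ℕ → ℝ) hA
    push_cast [Nat.cast_sub (show s+1 ≤ d by omega), Nat.cast_sub (show 1 ≤ d by omega)] at h
    exact h
  have c1 : (0:ℝ) < (Nat.choose d (s+1) : ℝ) := by
    exact_mod_cast Nat.choose_pos (by omega)
  have c2 : ((s:ℝ)+1) ≠ 0 := by positivity
  have c3 : ((d:ℝ) - ((s:ℝ)+1)) ≠ 0 := by
    have : (s:ℝ) + 1 < (d:ℝ) := by exact_mod_cast (show s+1 < d by omega)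
    linarith
  have c4 : ((d:ℝ) - 1) ≠ 0 := by
    have : (1:ℝ) < (d:ℝ) := by exact_mod_cast (show 1 < d by omega)
    linarith
  unfold shapleyKernel
  push_cast
  field_simp
  nlinarith [hA', c1]


theorem L2 (d s : ℕ) (hd : 2 ≤ d) (h1 : 1 ≤ s) (hs : s ≤ d - 1) :
    (1 / ((d:ℝ)-1)) * (s : ℝ) * (Nat.choose (d-1) s : ℝ) * shapleyKernel d s = 1/(d:ℝ) := by
  have hB := natB d s (by omega) hs
  have hB' : ((d:ℝ) - (s:ℝ)) * (Nat.choose d s : ℝ) = (d:ℝ) * (Nat.choose (d-1) s : ℝ) := by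
    have h := congrArg (Nat.cast : ℕ → ℝ) hB
    push_cast [Nat.cast_sub (show s ≤ d by omega)] at h
    exact h
  have c1 : (0:ℝ) < (Nat.choose d s : ℝ) := by
    exact_mod_cast Nat.choose_pos (by omega)
  have c2 : ((s:ℝ)) ≠ 0 := by exact_mod_cast (show s ≠ 0 by omega)
  have c3 : ((d:ℝ) - (s:ℝ)) ≠ 0 := by
    have : (s:ℝ) < (d:ℝ) := by exact_mod_cast (show s < d by omega)
    linarith
  have c4 : ((d:ℝ) - 1) ≠ 0 := by
    have : (1:ℝ) < (d:ℝ) := by exact_mod_cast (show 1 < d by omega)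
    linarith
  have c5 : (0:ℝ) < (d:ℝ) := by exact_mod_cast (show 0 < d by omega)
  unfold shapleyKernel
  field_simp
  nlinarith [hB', c1]

theorem sum_last_coord_zero (d : ℕ) (hd : 2 ≤ d) (i : Fin d) (hi : (i : ℕ) < d - 1) :
    ∑ S ∈ univ.powerset.filter
        (fun S : Finset (Fin d) => S ≠ ∅ ∧ (⟨d - 1, by omega⟩ : Fin d) ∉ S),
      (((d : ℝ) / ((d : ℝ) - 1)) * indicatorVec S i -
          (1 / ((d : ℝ) - 1)) * (S.card : ℝ)) * shapleyKernel d S.card =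
      1 / (d : ℝ) := by
  have hd0 : (d:ℝ) ≠ 0 := by positivity
  have hd1 : ((d:ℝ) - 1) ≠ 0 := by
    have : (1:ℝ) < (d:ℝ) := by exact_mod_cast (show 1 < d by omega)
    linarith
  set lst : Fin d := ⟨d - 1, by omega⟩ with hlst
  set T : Finset (Fin d) := univ.erase lst with hTdef
  have hiT : i ∈ T := by
    refine mem_erase.2 ⟨?_, mem_univ i⟩
    intro h
    have := congrArg Fin.val h
    simp [hlst] at this
    omega
  have hTcard : T.card = d - 1 := by
    simp [hTdef, card_erase_of_mem, card_univ]
  set T' : Finset (Fin d) := T.erase i with hT'def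
  have hT'card : T'.card = d - 2 := by
    rw [hT'def, card_erase_of_mem hiT, hTcard]
    omega
  have hins : T = insert i T' := (insert_erase hiT).symm
  have hidx : univ.powerset.filter
        (fun S : Finset (Fin d) => S ≠ ∅ ∧ (⟨d - 1, by omega⟩ : Fin d) ∉ S)
      = T.powerset.filter (fun S => S ≠ ∅) := by
    ext S
    simp only [mem_filter, mem_powerset, subset_univ, true_and, hTdef, subset_erase]
    tauto
  rw [hidx, sum_filter_of_ne (by
    intro S hS hne
    intro hS0
    apply hne
    subst hS0
    simp [indicatorVec])]
  have hsplit : ∀ S : Finset (Fin d),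
      (((d:ℝ)/((d:ℝ)-1)) * indicatorVec S i - (1/((d:ℝ)-1)) * (S.card:ℝ)) * shapleyKernel d S.card
      = ((d:ℝ)/((d:ℝ)-1)) * indicatorVec S i * shapleyKernel d S.card
        - (1/((d:ℝ)-1)) * (S.card:ℝ) * shapleyKernel d S.card := fun S => by ring
  simp_rw [hsplit]
  rw [sum_sub_distrib]
  have hP : ∑ S ∈ T.powerset,
      ((d:ℝ)/((d:ℝ)-1)) * indicatorVec S i * shapleyKernel d S.card = 1 := by
    rw [hins, sum_powerset_insert (notMem_erase i T)]
    have h0 : ∑ A ∈ T'.powerset,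
        ((d:ℝ)/((d:ℝ)-1)) * indicatorVec A i * shapleyKernel d A.card = 0 := by
      refine sum_eq_zero fun A hA => ?_
      have : i ∉ A := fun h => notMem_erase i T ((mem_powerset.1 hA) h)
      simp [indicatorVec, this]
    rw [h0, zero_add]
    have h1 : ∀ A ∈ T'.powerset,
        ((d:ℝ)/((d:ℝ)-1)) * indicatorVec (insert i A) i * shapleyKernel d (insert i A).card
        = ((d:ℝ)/((d:ℝ)-1)) * shapleyKernel d (A.card + 1) := by
      intro A hA
      have hiA : i ∉ A := fun h => notMem_erase i T ((mem_powerset.1 hA) h)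
      rw [card_insert_of_notMem hiA]
      simp [indicatorVec]
    rw [sum_congr rfl h1, sum_powerset_apply_card (fun m => ((d:ℝ)/((d:ℝ)-1)) * shapleyKernel d (m+1)), hT'card]
    have h2 : ∀ s ∈ range (d - 2 + 1),
        ((d-2).choose s) • (((d:ℝ)/((d:ℝ)-1)) * shapleyKernel d (s+1)) = 1/((d:ℝ)-1) := by
      intro s hs
      rw [nsmul_eq_mul]
      have := L1 d s hd (by simp [mem_range] at hs; omega)
      rw [← this]; ring
    rw [sum_congr rfl h2, sum_const, card_range, nsmul_eq_mul]
    have : ((d - 2 + 1 : ℕ) : ℝ) = (d:ℝ) - 1 := by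
      push_cast [Nat.cast_sub (show 2 ≤ d from hd)]; ring
    rw [this]
    field_simp
  have hQ : ∑ S ∈ T.powerset,
      (1/((d:ℝ)-1)) * (S.card:ℝ) * shapleyKernel d S.card = ((d:ℝ)-1)/(d:ℝ) := by
    rw [sum_powerset_apply_card (fun m => (1/((d:ℝ)-1)) * (m:ℝ) * shapleyKernel d m), hTcard]
    have h2 : ∀ s ∈ range (d - 1 + 1),
        ((d-1).choose s) • ((1/((d:ℝ)-1)) * (s:ℝ) * shapleyKernel d s)
        = if s = 0 then 0 else 1/(d:ℝ) := by
      intro s hs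
      rw [nsmul_eq_mul]
      by_cases h0 : s = 0
      · simp [h0]
      · rw [if_neg h0]
        have := L2 d s hd (by omega) (by simp [mem_range] at hs; omega)
        rw [← this]; ring
    rw [sum_congr rfl h2]
    have hr : d - 1 + 1 = d := by omega
    rw [hr]
    have h3 : ∀ s ∈ range d, (if s = 0 then (0:ℝ) else 1/(d:ℝ))
        = 1/(d:ℝ) - (if s = 0 then 1/(d:ℝ) else 0) := by
      intro s _
      by_cases h : s = 0 <;> simp [h]
    rw [sum_congr rfl h3, sum_sub_distrib, sum_const, card_range,
      sum_ite_eq' (range d) 0 (fun _ => 1/(d:ℝ)), if_pos (mem_range.2 (by omega)),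
      nsmul_eq_mul]
    field_simp
  rw [hP, hQ]
  field_simp
  ring
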